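/- Consider the AdaDiag ODE: dW/dt = -P(t) · M/(√V + ε), dM/dt = P(t)^T G - M, dV/dt = (P(t)^T G)² - V, where G = ∇L(W), P(t) is orthogonal for each t, ε > 0, and V entrywise positive. Then H(W, M, V) = L(W) + (1/2)⟨M/(√V + ε), M⟩ satisfies dH/dt ≤ -(1/4)⟨M²/(√V ⊙ (√V+ε)²), (P(t)^T G)²⟩ ≤ 0. -/

import Mathlib

open Matrix

attribute [local instance] Matrix.frobeniusNormedAddCommGroup Matrix.frobeniusNormedSpace

/-- Frobenius inner product of matrices. -/
def mInner {m n : ℕ} (A B : Matrix (Fin m) (Fin n) ℝ) : ℝ :=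
  ∑ i, ∑ j, A i j * B i j

/-- Auxiliary: a `PiLp 2`-valued function has a derivative if all components do. -/
lemma hasDerivAt_piLp {ι : Type*} [Fintype ι] {E : ι → Type*} [∀ i, NormedAddCommGroup (E i)]
    [∀ i, NormedSpace ℝ (E i)] {f : ℝ → PiLp 2 E} {f' : PiLp 2 E} {t : ℝ}
    (h : ∀ i, HasDerivAt (fun s => f s i) (f' i) t) : HasDerivAt f f' t := by
  have hF : HasFDerivAt f (ContinuousLinearMap.smulRight (1 : ℝ →L[ℝ] ℝ) f') t := by
    rw [← hasFDerivWithinAt_univ, hasFDerivWithinAt_piLp]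
    intro i
    rw [hasFDerivWithinAt_univ]
    have heq : (PiLp.proj 2 E i).comp (ContinuousLinearMap.smulRight (1 : ℝ →L[ℝ] ℝ) f') =
        ContinuousLinearMap.smulRight (1 : ℝ →L[ℝ] ℝ) (f' i) := by
      ext; simp
    rw [heq]
    exact (h i).hasFDerivAt
  exact hF.hasDerivAt.congr_deriv (by simp)

/-- Auxiliary: a matrix-valued function has a derivative (w.r.t. the Frobenius norm)
if all its entries do. -/
lemma hasDerivAt_matrix {m n : ℕ} {f : ℝ → Matrix (Fin m) (Fin n) ℝ}
    {f' : Matrix (Fin m) (Fin n) ℝ} {t : ℝ}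
    (h : ∀ i j, HasDerivAt (fun s => f s i j) (f' i j) t) : HasDerivAt f f' t :=
  by
  have key : ∀ x : Matrix (Fin m) (Fin n) ℝ,
      x = ∑ i, ∑ j, x i j • Matrix.single i j (1 : ℝ) := by
    intro x
    conv_lhs => rw [Matrix.matrix_eq_sum_single x]
    simp only [Matrix.smul_single, smul_eq_mul, mul_one]
  have hf : f = fun s => ∑ i, ∑ j, f s i j • Matrix.single i j (1 : ℝ) :=
    funext fun s => key (f s)
  rw [hf, key f']
  exact HasDerivAt.fun_sum fun i _ => HasDerivAt.fun_sum fun j _ =>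
    (h i j).smul_const (Matrix.single i j (1 : ℝ))

/-- Auxiliary: scalar entrywise inequality. -/
lemma entry_ineq (a g v ε : ℝ) (hv : 0 < v) (hε : 0 < ε) :
    -(g * (a / (Real.sqrt v + ε))) +
      1 / 2 * ((((g - a) * (Real.sqrt v + ε) - a * ((g ^ 2 - v) / (2 * Real.sqrt v))) /
          (Real.sqrt v + ε) ^ 2) * a + a / (Real.sqrt v + ε) * (g - a)) ≤
    -(1 / 4) * (a ^ 2 / (Real.sqrt v * (Real.sqrt v + ε) ^ 2) * g ^ 2) := by
  set s0 := Real.sqrt v with hs0def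
  have hs0 : 0 < s0 := Real.sqrt_pos.2 hv
  have hv2 : s0 ^ 2 = v := Real.sq_sqrt hv.le
  have hd : 0 < s0 + ε := by linarith
  rw [← sub_nonneg, ← hv2]
  have key : -(1 / 4) * (a ^ 2 / (s0 * (s0 + ε) ^ 2) * g ^ 2) -
      (-(g * (a / (s0 + ε))) +
        1 / 2 * ((((g - a) * (s0 + ε) - a * ((g ^ 2 - s0 ^ 2) / (2 * s0))) /
            (s0 + ε) ^ 2) * a + a / (s0 + ε) * (g - a))) =
      a ^ 2 * (4 * (s0 + ε) - s0) / (4 * (s0 + ε) ^ 2) := by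
    field_simp
    ring
  rw [key]
  apply div_nonneg
  · nlinarith [sq_nonneg a]
  · positivity

/-- In the AdaDiag ODE (dW/dt = -P(t)·M/(√V+ε), dM/dt = P(t)ᵀG - M,
dV/dt = (P(t)ᵀG)² - V, G = ∇L(W), P(t) orthogonal, ε > 0, V entrywise positive),
the Hamiltonian H = L(W) + (1/2)⟨M/(√V+ε), M⟩ satisfies
dH/dt ≤ -(1/4)⟨M²/(√V ⊙ (√V+ε)²), (P(t)ᵀG)²⟩ ≤ 0. -/
theorem adadiag_ode_hamiltonian_descent {m n : ℕ}
    (L : Matrix (Fin m) (Fin n) ℝ → ℝ)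
    (G : Matrix (Fin m) (Fin n) ℝ → Matrix (Fin m) (Fin n) ℝ)
    (l : Matrix (Fin m) (Fin n) ℝ → (Matrix (Fin m) (Fin n) ℝ →L[ℝ] ℝ))
    (hL : ∀ X, HasFDerivAt L (l X) X)
    (hl : ∀ X H, l X H = mInner (G X) H)
    (ε : ℝ) (hε : 0 < ε)
    (P : ℝ → Matrix (Fin m) (Fin m) ℝ)
    (hP : ∀ t, P t * (P t)ᵀ = 1 ∧ (P t)ᵀ * P t = 1)
    (W M V : ℝ → Matrix (Fin m) (Fin n) ℝ)
    (hV : ∀ t i j, 0 < V t i j)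
    (hW : ∀ t i j, HasDerivAt (fun s => W s i j)
      (-((P t * Matrix.of fun a b => M t a b / (Real.sqrt (V t a b) + ε)) i j)) t)
    (hM : ∀ t i j, HasDerivAt (fun s => M s i j)
      (((P t)ᵀ * G (W t)) i j - M t i j) t)
    (hVd : ∀ t i j, HasDerivAt (fun s => V s i j)
      ((((P t)ᵀ * G (W t)) i j) ^ 2 - V t i j) t) :
    ∀ t D, HasDerivAt (fun s => L (W s) +
        (1 / 2) * mInner (Matrix.of fun i j => M s i j / (Real.sqrt (V s i j) + ε)) (M s))
        D t →
      D ≤ -(1 / 4) * mInner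
            (Matrix.of fun i j => (M t i j) ^ 2 /
              (Real.sqrt (V t i j) * (Real.sqrt (V t i j) + ε) ^ 2))
            (Matrix.of fun i j => (((P t)ᵀ * G (W t)) i j) ^ 2) ∧
      -(1 / 4) * mInner
            (Matrix.of fun i j => (M t i j) ^ 2 /
              (Real.sqrt (V t i j) * (Real.sqrt (V t i j) + ε) ^ 2))
            (Matrix.of fun i j => (((P t)ᵀ * G (W t)) i j) ^ 2) ≤ 0 := by
  intro t D hD
  set g : Matrix (Fin m) (Fin n) ℝ := (P t)ᵀ * G (W t) with hgdef
  -- matrix derivative of W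
  have hW' : HasDerivAt W
      (Matrix.of fun i j =>
        -((P t * Matrix.of fun a b => M t a b / (Real.sqrt (V t a b) + ε)) i j)) t :=
    hasDerivAt_matrix fun i j => hW t i j
  have hLW : HasDerivAt (fun s => L (W s))
      (l (W t) (Matrix.of fun i j =>
        -((P t * Matrix.of fun a b => M t a b / (Real.sqrt (V t a b) + ε)) i j))) t :=
    (hL (W t)).comp_hasDerivAt t hW'
  -- entrywise derivative of the kinetic term
  have hentry : ∀ i j, HasDerivAt
      (fun s => M s i j / (Real.sqrt (V s i j) + ε) * M s i j)
      ((((g i j - M t i j) * (Real.sqrt (V t i j) + ε) -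
          M t i j * (((g i j) ^ 2 - V t i j) / (2 * Real.sqrt (V t i j)))) /
          (Real.sqrt (V t i j) + ε) ^ 2) * M t i j +
        M t i j / (Real.sqrt (V t i j) + ε) * (g i j - M t i j)) t := by
    intro i j
    have hd : Real.sqrt (V t i j) + ε ≠ 0 := by
      have := Real.sqrt_nonneg (V t i j); linarith
    have hsq : HasDerivAt (fun s => Real.sqrt (V s i j) + ε)
        (((g i j) ^ 2 - V t i j) / (2 * Real.sqrt (V t i j))) t :=
      ((hVd t i j).sqrt (hV t i j).ne').add_const ε
    exact ((hM t i j).div hsq hd).mul (hM t i j)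
  have hSum : HasDerivAt
      (fun s => ∑ i, ∑ j, M s i j / (Real.sqrt (V s i j) + ε) * M s i j)
      (∑ i, ∑ j, ((((g i j - M t i j) * (Real.sqrt (V t i j) + ε) -
          M t i j * (((g i j) ^ 2 - V t i j) / (2 * Real.sqrt (V t i j)))) /
          (Real.sqrt (V t i j) + ε) ^ 2) * M t i j +
        M t i j / (Real.sqrt (V t i j) + ε) * (g i j - M t i j))) t :=
    HasDerivAt.fun_sum fun i _ => HasDerivAt.fun_sum fun j _ => hentry i j
  have hH : HasDerivAt (fun s => L (W s) +
      (1 / 2) * mInner (Matrix.of fun i j => M s i j / (Real.sqrt (V s i j) + ε)) (M s))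
      (l (W t) (Matrix.of fun i j =>
        -((P t * Matrix.of fun a b => M t a b / (Real.sqrt (V t a b) + ε)) i j)) +
       (1 / 2) * ∑ i, ∑ j, ((((g i j - M t i j) * (Real.sqrt (V t i j) + ε) -
          M t i j * (((g i j) ^ 2 - V t i j) / (2 * Real.sqrt (V t i j)))) /
          (Real.sqrt (V t i j) + ε) ^ 2) * M t i j +
        M t i j / (Real.sqrt (V t i j) + ε) * (g i j - M t i j))) t :=
    hLW.add (hSum.const_mul (1 / 2))
  have hDeq := hD.unique hH
  -- sum-swap identity for the loss term
  have hswap : l (W t) (Matrix.of fun i j =>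
      -((P t * Matrix.of fun a b => M t a b / (Real.sqrt (V t a b) + ε)) i j)) =
      ∑ i, ∑ j, -(g i j * (M t i j / (Real.sqrt (V t i j) + ε))) := by
    rw [hl]
    simp only [mInner, Matrix.of_apply, Matrix.mul_apply, Matrix.transpose_apply, hgdef,
      mul_neg, Finset.mul_sum, Finset.sum_mul, Finset.sum_neg_distrib]
    congr 1
    have step : ∀ F : Fin m → Fin n → Fin m → ℝ,
        (∑ x, ∑ y, ∑ i, F x y i) = ∑ i, ∑ y, ∑ x, F x y i := by
      intro F
      have h1 : ∀ x : Fin m, (∑ y : Fin n, ∑ i : Fin m, F x y i) =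
          ∑ i : Fin m, ∑ y : Fin n, F x y i := fun x => Finset.sum_comm
      simp_rw [h1]
      rw [Finset.sum_comm]
      exact Finset.sum_congr rfl fun i _ => Finset.sum_comm
    rw [step fun x y i => G (W t) x y * (P t x i * (M t i y / (Real.sqrt (V t i y) + ε)))]
    exact Finset.sum_congr rfl fun x _ => Finset.sum_congr rfl fun y _ =>
      Finset.sum_congr rfl fun i _ => by ring
  -- rewrite the RHS bound as a double sum
  have hRHS : -(1 / 4) * mInner
      (Matrix.of fun i j => (M t i j) ^ 2 /
        (Real.sqrt (V t i j) * (Real.sqrt (V t i j) + ε) ^ 2))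
      (Matrix.of fun i j => (g i j) ^ 2) =
      ∑ i, ∑ j, -(1 / 4) * ((M t i j) ^ 2 /
        (Real.sqrt (V t i j) * (Real.sqrt (V t i j) + ε) ^ 2) * (g i j) ^ 2) := by
    simp only [mInner, Matrix.of_apply, Finset.mul_sum, mul_assoc]
  have hRHSnonpos : -(1 / 4) * mInner
      (Matrix.of fun i j => (M t i j) ^ 2 /
        (Real.sqrt (V t i j) * (Real.sqrt (V t i j) + ε) ^ 2))
      (Matrix.of fun i j => (g i j) ^ 2) ≤ 0 := by
    rw [hRHS]
    apply Finset.sum_nonpos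
    intro i _
    apply Finset.sum_nonpos
    intro j _
    have h1 : 0 ≤ (M t i j) ^ 2 /
        (Real.sqrt (V t i j) * (Real.sqrt (V t i j) + ε) ^ 2) * (g i j) ^ 2 := by positivity
    linarith
  refine ⟨?_, hRHSnonpos⟩
  rw [hDeq, hswap, hRHS, Finset.mul_sum]
  simp only [Finset.mul_sum]
  rw [← Finset.sum_add_distrib]
  apply Finset.sum_le_sum
  intro i _
  rw [← Finset.sum_add_distrib]
  apply Finset.sum_le_sum
  intro j _
  exact entry_ineq (M t i j) (g i j) (V t i j) ε (hV t i j) hε
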